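/- Let A, B be n×m real matrices with m ≥ 2, and suppose A satisfies the spark condition for sparsity 1 (i.e., no column of A is zero and no two columns are parallel, equivalently A is injective on 1-sparse vectors). If for each i = 1,...,m there exists a 1-sparse vector b_i with A e_i = B b_i, then there exist a permutation matrix P and an invertible diagonal matrix D such that A = B P D. -/

import Mathlib

/-- A vector is `k`-sparse if it has at most `k` nonzero entries. -/
def KSparse {m : ℕ} (k : ℕ) (a : Fin m → ℝ) : Prop :=
  (Finset.univ.filter fun i => a i ≠ 0).card ≤ k

lemma ksparse_single {m : ℕ} (j : Fin m) (c : ℝ) : KSparse 1 (Pi.single j c) := by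
  unfold KSparse
  have h : ∀ i, (Pi.single j c : Fin m → ℝ) i ≠ 0 → i = j := by
    intro i hi
    by_contra hij
    exact hi (Pi.single_eq_of_ne (M := fun _ : Fin m => ℝ) hij c)
  refine le_trans (Finset.card_le_card (fun i hi => Finset.mem_singleton.mpr
    (h i (Finset.mem_filter.mp hi).2)) : _ ≤ ({j} : Finset (Fin m)).card) (by simp)

lemma sparse_structure {m : ℕ} (hm : 0 < m) (b : Fin m → ℝ) (hb : KSparse 1 b) :
    ∃ j c, b = Pi.single j c := by
  by_cases h0 : b = 0
  · exact ⟨⟨0, hm⟩, 0, by simp [h0]⟩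
  · obtain ⟨j, hj⟩ := Function.ne_iff.mp h0
    simp only [Pi.zero_apply] at hj
    refine ⟨j, b j, ?_⟩
    funext k
    by_cases hk : k = j
    · subst hk; simp
    · rw [Pi.single_eq_of_ne hk]
      by_contra hbk
      have hsub : ({j, k} : Finset (Fin m)) ⊆
          Finset.univ.filter fun i => b i ≠ 0 := by
        intro i hi
        simp only [Finset.mem_insert, Finset.mem_singleton] at hi
        rcases hi with rfl | rfl <;> simp [hj, hbk]
      have : ({j, k} : Finset (Fin m)).card = 2 := by
        rw [Finset.card_insert_of_notMem (by simp [Ne.symm hk]), Finset.card_singleton]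
      have h2 := Finset.card_le_card hsub
      rw [this] at h2
      unfold KSparse at hb
      omega

theorem stmt2 {n m : ℕ} (hm : 2 ≤ m)
    (A B : Matrix (Fin n) (Fin m) ℝ)
    (hA : ∀ a₁ a₂ : Fin m → ℝ, KSparse 1 a₁ → KSparse 1 a₂ →
      A.mulVec a₁ = A.mulVec a₂ → a₁ = a₂)
    (hcode : ∀ i : Fin m, ∃ b : Fin m → ℝ, KSparse 1 b ∧
      A.mulVec (Pi.single i 1) = B.mulVec b) :
    ∃ (σ : Equiv.Perm (Fin m)) (d : Fin m → ℝ),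
      (∀ i, d i ≠ 0) ∧ A = B * σ.permMatrix ℝ * Matrix.diagonal d := by
  -- choose f and c
  have key : ∀ i : Fin m, ∃ (j : Fin m) (c : ℝ), c ≠ 0 ∧
      A.mulVec (Pi.single i 1) = B.mulVec (Pi.single j c) := by
    intro i
    obtain ⟨b, hb, hab⟩ := hcode i
    obtain ⟨j, c, rfl⟩ := sparse_structure (by omega) b hb
    refine ⟨j, c, ?_, hab⟩
    rintro rfl
    have h0 : A.mulVec (Pi.single i 1) = A.mulVec (0 : Fin m → ℝ) := by
      rw [hab]
      simp [Matrix.mulVec_zero]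
    have := hA _ _ (ksparse_single i 1) (by simpa using ksparse_single i (0:ℝ)) h0
    have := congrFun this i
    simp at this
  choose f c hc hfc using key
  -- f is injective
  have hcol : ∀ i r, A r i = c i * B r (f i) := by
    intro i r
    have h1 := congrFun (hfc i) r
    simpa [Matrix.mulVec_single, mul_comm] using h1
  have hf : Function.Injective f := by
    intro i j hij
    by_contra hne
    have h1 : A.mulVec (Pi.single i (c j)) = A.mulVec (Pi.single j (c i)) := by
      funext r
      simp only [Matrix.mulVec_single, Pi.smul_apply, Matrix.col_apply, op_smul_eq_mul]
      have := hcol i r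
      have := hcol j r
      rw [show A r i * c j = c j * A r i from mul_comm _ _,
        show A r j * c i = c i * A r j from mul_comm _ _, hcol i r, hcol j r, hij]
      ring
    have h2 := hA _ _ (ksparse_single i (c j)) (ksparse_single j (c i)) h1
    have := congrFun h2 i
    rw [Pi.single_eq_same, Pi.single_eq_of_ne hne] at this
    exact hc j this
  let σ : Equiv.Perm (Fin m) := Equiv.ofBijective f (Finite.injective_iff_bijective.mp hf)
  refine ⟨σ.symm, c, hc, ?_⟩
  ext r j
  rw [Matrix.mul_apply]
  have hPerm : ∀ k l : Fin m, (Equiv.Perm.permMatrix ℝ σ.symm) k l = if k = σ l then 1 else 0 := by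
    intro k l
    simp only [Equiv.Perm.permMatrix, PEquiv.toMatrix_apply, Equiv.toPEquiv_apply,
      Option.mem_def, Option.some.injEq]
    congr 1
    simp only [eq_iff_iff]
    constructor
    · intro h; rw [← h]; simp [σ]
    · intro h; rw [h]; simp [σ]
  have : ∀ k, (B * Equiv.Perm.permMatrix ℝ σ.symm) r k * Matrix.diagonal c k j =
      if k = j then c j * B r (σ j) else 0 := by
    intro k
    rw [Matrix.mul_apply]
    by_cases hkj : k = j
    · subst hkj
      simp only [Matrix.diagonal_apply_eq, if_pos rfl]
      rw [Finset.sum_congr rfl (fun l _ => by rw [hPerm])]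
      simp [mul_ite, Finset.sum_ite_eq', mul_comm]
    · simp [Matrix.diagonal_apply_ne' _ (Ne.symm hkj), hkj]
  rw [Finset.sum_congr rfl (fun k _ => this k), Finset.sum_ite_eq' Finset.univ j _]
  simp only [Finset.mem_univ, if_pos]
  have : σ j = f j := rfl
  rw [this, ← hcol j r]
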